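/- Let M ≥ 0 and 0 ≤ p ≤ M be integers. The number of Dyck words of semilength 2M (i.e., lists of 2M up-steps +1 and 2M down-steps −1 with all partial sums nonnegative) whose height after the first 2M steps equals 2p is (binom(2M, M+p) − binom(2M, M+p+1))^2. -/

import Mathlib

open Finset

namespace DyckAux

def step (b : Bool) : ℤ := if b then 1 else -1

lemma step_eq (b : Bool) : step b = 1 ∨ step b = -1 := by
  cases b <;> simp [step]

lemma step_injective : Function.Injective step := by
  intro a b h
  cases a <;> cases b <;> simp_all [step]

def psum {n : ℕ} (f : Fin n → Bool) (k : ℕ) : ℤ :=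
  ∑ i ∈ Finset.range k, if h : i < n then step (f ⟨i, h⟩) else 0

lemma psum_zero {n : ℕ} (f : Fin n → Bool) : psum f 0 = 0 := by simp [psum]

lemma psum_succ {n : ℕ} (f : Fin n → Bool) (k : ℕ) :
    psum f (k + 1) = psum f k + (if h : k < n then step (f ⟨k, h⟩) else 0) :=
  Finset.sum_range_succ _ _

lemma psum_snoc_le {n : ℕ} (f : Fin n → Bool) (b : Bool) {k : ℕ} (hk : k ≤ n) :
    psum (Fin.snoc f b) k = psum f k := by
  unfold psum
  refine Finset.sum_congr rfl fun i hi => ?_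
  simp only [Finset.mem_range] at hi
  have h1 : i < n := lt_of_lt_of_le hi hk
  have h2 : i < n + 1 := by omega
  rw [dif_pos h1, dif_pos h2]
  congr 1
  have : (⟨i, h2⟩ : Fin (n + 1)) = Fin.castSucc ⟨i, h1⟩ := rfl
  rw [this, Fin.snoc_castSucc]

lemma psum_snoc_top {n : ℕ} (f : Fin n → Bool) (b : Bool) :
    psum (Fin.snoc f b) (n + 1) = psum f n + step b := by
  rw [psum_succ, psum_snoc_le f b le_rfl, dif_pos (Nat.lt_succ_self n)]
  have : (⟨n, Nat.lt_succ_self n⟩ : Fin (n + 1)) = Fin.last n := rfl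
  rw [this, Fin.snoc_last]

lemma psum_eq_init {n : ℕ} (f : Fin (n + 1) → Bool) {k : ℕ} (hk : k ≤ n) :
    psum f k = psum (Fin.init f) k := by
  conv_lhs => rw [← Fin.snoc_init_self f]
  exact psum_snoc_le _ _ hk

lemma psum_top_init {n : ℕ} (f : Fin (n + 1) → Bool) :
    psum f (n + 1) = psum (Fin.init f) n + step (f (Fin.last n)) := by
  conv_lhs => rw [← Fin.snoc_init_self f]
  exact psum_snoc_top _ _

def P (n u : ℕ) : Finset (Fin n → Bool) :=
  Finset.univ.filter fun f =>
    (∀ k ≤ n, 0 ≤ psum f k) ∧ psum f n = 2 * (u : ℤ) - n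

lemma mem_P {n u : ℕ} {f : Fin n → Bool} :
    f ∈ P n u ↔ (∀ k ≤ n, 0 ≤ psum f k) ∧ psum f n = 2 * (u : ℤ) - n := by
  simp [P]

lemma choose_succ_le {n k : ℕ} (h : n ≤ 2 * k + 1) : n.choose (k + 1) ≤ n.choose k := by
  have key : n.choose (k + 1) * (k + 1) ≤ n.choose k * (k + 1) := by
    calc n.choose (k + 1) * (k + 1) = n.choose k * (n - k) := Nat.choose_succ_right_eq n k
    _ ≤ n.choose k * (k + 1) := Nat.mul_le_mul_left _ (by omega)
  exact Nat.le_of_mul_le_mul_right key (Nat.succ_pos k)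

lemma le_choose_succ {n k : ℕ} (h : 2 * k + 1 ≤ n) : n.choose k ≤ n.choose (k + 1) := by
  have key : n.choose k * (k + 1) ≤ n.choose (k + 1) * (k + 1) := by
    calc n.choose k * (k + 1) ≤ n.choose k * (n - k) := Nat.mul_le_mul_left _ (by omega)
    _ = n.choose (k + 1) * (k + 1) := (Nat.choose_succ_right_eq n k).symm
  exact Nat.le_of_mul_le_mul_right key (Nat.succ_pos k)

theorem card_P_eq (n u : ℕ) : (P n u).card = n.choose u - n.choose (u + 1) := by
  induction n generalizing u with
  | zero =>
    cases u with
    | zero =>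
      have h1 : P 0 0 = Finset.univ := by
        ext f
        simp only [mem_P, Finset.mem_univ, iff_true]
        refine ⟨fun k hk => ?_, by simp [psum]⟩
        interval_cases k
        simp [psum]
      rw [h1]
      simp [Finset.card_univ]
    | succ u =>
      have h1 : P 0 (u + 1) = ∅ := by
        ext f
        simp only [mem_P, Finset.notMem_empty, iff_false, not_and]
        intro _
        rw [psum_zero]
        push_cast
        omega
      rw [h1]
      simp
  | succ n ih =>
    cases u with
    | zero =>
      have h1 : P (n + 1) 0 = ∅ := by
        ext f
        simp only [mem_P, Finset.notMem_empty, iff_false, not_and]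
        intro hnn heq
        have := hnn (n + 1) le_rfl
        rw [heq] at this
        push_cast at this
        omega
      rw [h1, Nat.choose_zero_right, Nat.choose_one_right]
      simp
    | succ u =>
      classical
      -- card of "last step up" part
      have hA : ((P (n + 1) (u + 1)).filter fun f => f (Fin.last n) = true).card
          = (P n u).card := by
        apply Finset.card_nbij' (fun f => Fin.init f) (fun g => Fin.snoc g true)
        · intro f hf
          rw [Finset.mem_coe, Finset.mem_filter, mem_P] at hf
          obtain ⟨⟨hnn, heq⟩, hlast⟩ := hf
          rw [Finset.mem_coe, mem_P]
          constructor
          · intro k hk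
            rw [← psum_eq_init f hk]
            exact hnn k (by omega)
          · have := psum_top_init f
            rw [heq, hlast] at this
            simp only [step, if_true] at this
            push_cast at this ⊢
            omega
        · intro g hg
          rw [Finset.mem_coe, mem_P] at hg
          obtain ⟨hnn, heq⟩ := hg
          rw [Finset.mem_coe, Finset.mem_filter, mem_P]
          refine ⟨⟨?_, ?_⟩, Fin.snoc_last _ _⟩
          · intro k hk
            rcases Nat.lt_or_ge k (n + 1) with h | h
            · rw [psum_snoc_le g true (by omega)]
              exact hnn k (by omega)
            · have hk1 : k = n + 1 := by omega
              subst hk1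
              rw [psum_snoc_top, heq]
              have := hnn n le_rfl
              rw [heq] at this
              simp only [step, if_true]
              omega
          · rw [psum_snoc_top, heq]
            simp only [step, if_true]
            push_cast
            ring
        · intro f hf
          rw [Finset.mem_coe, Finset.mem_filter] at hf
          rw [← hf.2]; exact Fin.snoc_init_self _
        · intro g _
          exact Fin.init_snoc _ _
      rcases Nat.lt_or_ge n (2 * (u + 1)) with hcase | hcase
      · have hB : ((P (n + 1) (u + 1)).filter fun f => ¬(f (Fin.last n) = true)).card
            = (P n (u + 1)).card := by
          clear hA
          apply Finset.card_nbij' (fun f => Fin.init f) (fun g => Fin.snoc g false)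
          · intro f hf
            rw [Finset.mem_coe, Finset.mem_filter, mem_P] at hf
            obtain ⟨⟨hnn, heq⟩, hlast⟩ := hf
            have hlast' : f (Fin.last n) = false := by
              cases h : f (Fin.last n)
              · rfl
              · exact absurd h hlast
            rw [Finset.mem_coe, mem_P]
            constructor
            · intro k hk
              rw [← psum_eq_init f hk]
              exact hnn k (by omega)
            · have := psum_top_init f
              rw [heq, hlast'] at this
              simp only [step, Bool.false_eq_true, if_false] at this
              push_cast at this ⊢
              omega
          · intro g hg
            rw [Finset.mem_coe, mem_P] at hg
            obtain ⟨hnn, heq⟩ := hg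
            rw [Finset.mem_coe, Finset.mem_filter, mem_P]
            refine ⟨⟨?_, ?_⟩, by simp [Fin.snoc_last]⟩
            · intro k hk
              rcases Nat.lt_or_ge k (n + 1) with h | h
              · rw [psum_snoc_le g false (by omega)]
                exact hnn k (by omega)
              · have hk1 : k = n + 1 := by omega
                subst hk1
                rw [psum_snoc_top, heq]
                simp only [step, Bool.false_eq_true, if_false]
                push_cast
                omega
            · rw [psum_snoc_top, heq]
              simp only [step, Bool.false_eq_true, if_false]
              push_cast
              ring
          · intro f hf
            rw [Finset.mem_coe, Finset.mem_filter] at hf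
            have hlast' : f (Fin.last n) = false := by
              cases h : f (Fin.last n)
              · rfl
              · exact absurd h hf.2
            rw [← hlast']; exact Fin.snoc_init_self _
          · intro g _
            exact Fin.init_snoc _ _
        have hsplit :
            ((P (n + 1) (u + 1)).filter fun f => f (Fin.last n) = true).card +
            ((P (n + 1) (u + 1)).filter fun f => ¬(f (Fin.last n) = true)).card
              = (P (n + 1) (u + 1)).card :=
          Finset.card_filter_add_card_filter_not _
        rw [← hsplit, hA, hB, ih u, ih (u + 1)]
        clear hsplit hA hB ih
        have p1 : (n + 1).choose (u + 1) = n.choose u + n.choose (u + 1) :=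
          Nat.choose_succ_succ n u
        have p2 : (n + 1).choose (u + 1 + 1) = n.choose (u + 1) + n.choose (u + 1 + 1) :=
          Nat.choose_succ_succ n (u + 1)
        have i1 : n.choose (u + 1) ≤ n.choose u := choose_succ_le (by omega)
        have i2 : n.choose (u + 1 + 1) ≤ n.choose (u + 1) := choose_succ_le (by omega)
        omega
      · have hB : ((P (n + 1) (u + 1)).filter fun f => ¬(f (Fin.last n) = true)).card
            = 0 := by
          clear hA
          rw [Finset.card_eq_zero]
          ext f
          simp only [Finset.mem_filter, Finset.notMem_empty, iff_false, not_and]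
          intro hf _
          exfalso
          rw [mem_P] at hf
          have h1 := hf.1 (n + 1) le_rfl
          rw [hf.2] at h1
          push_cast at h1
          omega
        have hsplit :
            ((P (n + 1) (u + 1)).filter fun f => f (Fin.last n) = true).card +
            ((P (n + 1) (u + 1)).filter fun f => ¬(f (Fin.last n) = true)).card
              = (P (n + 1) (u + 1)).card :=
          Finset.card_filter_add_card_filter_not _
        rw [← hsplit, hA, hB, ih u]
        clear hsplit hA hB ih
        have i1 : n.choose u ≤ n.choose (u + 1) := le_choose_succ (by omega)
        have i2 : (n + 1).choose (u + 1) ≤ (n + 1).choose (u + 1 + 1) :=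
          le_choose_succ (by omega)
        have p1 : (n + 1).choose (u + 1) = n.choose u + n.choose (u + 1) :=
          Nat.choose_succ_succ n u
        have p2 : (n + 1).choose (u + 1 + 1) = n.choose (u + 1) + n.choose (u + 1 + 1) :=
          Nat.choose_succ_succ n (u + 1)
        omega

/-! ### Sums over integer sequences -/

def tsum {n : ℕ} (ε : Fin n → ℤ) (k : ℕ) : ℤ :=
  ∑ i ∈ Finset.range k, if h : i < n then ε ⟨i, h⟩ else 0

lemma tsum_zero {n : ℕ} (ε : Fin n → ℤ) : tsum ε 0 = 0 := by
  unfold tsum; simp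

lemma filter_sum_eq {n : ℕ} (ε : Fin n → ℤ) (k : ℕ) (hk : k ≤ n) :
    ∑ i ∈ Finset.univ.filter (fun i : Fin n => (i : ℕ) < k), ε i = tsum ε k := by
  calc ∑ i ∈ Finset.univ.filter (fun i : Fin n => (i : ℕ) < k), ε i
      = ∑ i : Fin n, if (i : ℕ) < k then ε i else 0 := Finset.sum_filter _ _
    _ = ∑ i : Fin n,
        (fun j : ℕ => if h : j < n then (if j < k then ε ⟨j, h⟩ else 0) else 0) (i : ℕ) := by
        refine Finset.sum_congr rfl fun i _ => ?_
        simp [i.is_lt]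
    _ = ∑ j ∈ Finset.range n, if h : j < n then (if j < k then ε ⟨j, h⟩ else 0) else 0 :=
        Fin.sum_univ_eq_sum_range
          (fun j : ℕ => if h : j < n then (if j < k then ε ⟨j, h⟩ else 0) else 0) n
    _ = tsum ε k := by
        unfold tsum
        rw [Finset.range_eq_Ico, Finset.range_eq_Ico, ← Finset.sum_Ico_consecutive _ (Nat.zero_le k) hk]
        have h2 : ∑ j ∈ Finset.Ico k n,
            (if h : j < n then (if j < k then ε ⟨j, h⟩ else 0) else 0) = 0 := by
          refine Finset.sum_eq_zero fun j hj => ?_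
          rw [Finset.mem_Ico] at hj
          rw [dif_pos hj.2, if_neg (by omega)]
        rw [h2, add_zero]
        refine Finset.sum_congr rfl fun j hj => ?_
        rw [Finset.mem_Ico] at hj
        simp only [dif_pos (show j < n by omega)]
        rw [if_pos (by omega : j < k)]

lemma sum_univ_eq_tsum {n : ℕ} (ε : Fin n → ℤ) : ∑ i, ε i = tsum ε n := by
  have huniv : Finset.univ.filter (fun i : Fin n => (i : ℕ) < n) = Finset.univ :=
    Finset.filter_true_of_mem fun i _ => i.is_lt
  rw [← filter_sum_eq ε n le_rfl, huniv]

lemma sum_reflect (G : ℕ → ℤ) (a b c : ℕ) (hbc : b ≤ c) :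
    ∑ i ∈ Finset.Ico a b, G (c - 1 - i) = ∑ j ∈ Finset.Ico (c - b) (c - a), G j := by
  refine Finset.sum_nbij' (fun i => c - 1 - i) (fun j => c - 1 - j) ?_ ?_ ?_ ?_
    (fun x hx => rfl)
  all_goals intro x hx
  all_goals simp only [Finset.mem_Ico] at hx ⊢
  all_goals omega

/-! ### The gluing map -/

def Φ (M : ℕ) (f g : Fin (2 * M) → Bool) : Fin (4 * M) → ℤ := fun i =>
  if h : (i : ℕ) < 2 * M then step (f ⟨i, h⟩)
  else -step (g ⟨4 * M - 1 - i, by have := i.is_lt; omega⟩)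

def Φp (M : ℕ) (q : (Fin (2 * M) → Bool) × (Fin (2 * M) → Bool)) : Fin (4 * M) → ℤ :=
  Φ M q.1 q.2

lemma Φp_eq (M : ℕ) (f g : Fin (2 * M) → Bool) : Φp M (f, g) = Φ M f g := rfl

lemma tsum_Φ_low (M : ℕ) (f g : Fin (2 * M) → Bool) {k : ℕ} (hk : k ≤ 2 * M) :
    tsum (Φ M f g) k = psum f k := by
  unfold tsum psum
  refine Finset.sum_congr rfl fun i hi => ?_
  simp only [Finset.mem_range] at hi
  have h1 : i < 4 * M := by omega
  have h2 : i < 2 * M := by omega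
  rw [dif_pos h1, dif_pos h2]
  show Φ M f g ⟨i, h1⟩ = step (f ⟨i, h2⟩)
  unfold Φ
  rw [dif_pos (show ((⟨i, h1⟩ : Fin (4 * M)) : ℕ) < 2 * M from h2)]

lemma tsum_Φ_high (M : ℕ) (f g : Fin (2 * M) → Bool) {k : ℕ} (h1 : 2 * M ≤ k)
    (h2 : k ≤ 4 * M) :
    tsum (Φ M f g) k = psum f (2 * M) - psum g (2 * M) + psum g (4 * M - k) := by
  set G : ℕ → ℤ := fun j => if h : j < 2 * M then step (g ⟨j, h⟩) else 0 with hG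
  have hpsum : ∀ m : ℕ, psum g m = ∑ j ∈ Finset.Ico 0 m, G j := by
    intro m
    rw [← Finset.range_eq_Ico]
    rfl
  unfold tsum
  rw [Finset.range_eq_Ico, ← Finset.sum_Ico_consecutive _ (Nat.zero_le (2 * M)) h1]
  have e1 : ∑ i ∈ Finset.Ico 0 (2 * M),
      (if h : i < 4 * M then Φ M f g ⟨i, h⟩ else 0) = psum f (2 * M) := by
    rw [← Finset.range_eq_Ico]
    exact tsum_Φ_low M f g le_rfl
  have e2 : ∑ i ∈ Finset.Ico (2 * M) k,
      (if h : i < 4 * M then Φ M f g ⟨i, h⟩ else 0) = ∑ i ∈ Finset.Ico (2 * M) k,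
        -G (4 * M - 1 - i) := by
    refine Finset.sum_congr rfl fun i hi => ?_
    rw [Finset.mem_Ico] at hi
    have hi4 : i < 4 * M := by omega
    rw [dif_pos hi4]
    show Φ M f g ⟨i, hi4⟩ = _
    unfold Φ
    rw [dif_neg (show ¬((⟨i, hi4⟩ : Fin (4 * M)) : ℕ) < 2 * M by
      simp only [Fin.val_mk]; omega)]
    have hlt : 4 * M - 1 - i < 2 * M := by omega
    rw [hG]
    simp only [Fin.val_mk]
    rw [dif_pos hlt]
  rw [e1, e2]
  rw [Finset.sum_neg_distrib]
  have e3 : ∑ i ∈ Finset.Ico (2 * M) k, G (4 * M - 1 - i)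
      = ∑ j ∈ Finset.Ico (4 * M - k) (4 * M - 2 * M), G j := sum_reflect G _ _ _ h2
  rw [e3]
  have h4 : 4 * M - 2 * M = 2 * M := by omega
  rw [h4]
  have e4 : ∑ j ∈ Finset.Ico 0 (4 * M - k), G j + ∑ j ∈ Finset.Ico (4 * M - k) (2 * M), G j
      = ∑ j ∈ Finset.Ico 0 (2 * M), G j :=
    Finset.sum_Ico_consecutive _ (Nat.zero_le _) (by omega)
  rw [hpsum, hpsum]
  linarith [e4]

lemma Φp_inj (M : ℕ) : Function.Injective (Φp M) := by
  rintro ⟨f, g⟩ ⟨f', g'⟩ h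
  simp only [Φp] at h
  have hf : f = f' := by
    funext j
    have hj4 : (j : ℕ) < 4 * M := by have := j.is_lt; omega
    have hc := congrFun h ⟨j, hj4⟩
    unfold Φ at hc
    rw [dif_pos (show ((⟨(j : ℕ), hj4⟩ : Fin (4 * M)) : ℕ) < 2 * M from j.is_lt),
      dif_pos (show ((⟨(j : ℕ), hj4⟩ : Fin (4 * M)) : ℕ) < 2 * M from j.is_lt)] at hc
    have := step_injective hc
    simpa [Fin.eta] using this
  have hg : g = g' := by
    funext j
    have hj2 := j.is_lt
    have hj4 : 4 * M - 1 - (j : ℕ) < 4 * M := by omega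
    have hge : ¬((⟨4 * M - 1 - (j : ℕ), hj4⟩ : Fin (4 * M)) : ℕ) < 2 * M := by
      simp only [Fin.val_mk]
      omega
    have hc := congrFun h ⟨4 * M - 1 - (j : ℕ), hj4⟩
    unfold Φ at hc
    rw [dif_neg hge, dif_neg hge, neg_inj] at hc
    have h2 := step_injective hc
    have hidx : 4 * M - 1 - ((⟨4 * M - 1 - (j : ℕ), hj4⟩ : Fin (4 * M)) : ℕ) = (j : ℕ) := by
      simp only [Fin.val_mk]
      omega
    simpa [hidx, Fin.eta] using h2
  rw [Prod.mk.injEq]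
  exact ⟨hf, hg⟩

def fhalf (M : ℕ) (ε : Fin (4 * M) → ℤ) : Fin (2 * M) → Bool := fun j =>
  decide (ε ⟨j, by have := j.is_lt; omega⟩ = 1)

def ghalf (M : ℕ) (ε : Fin (4 * M) → ℤ) : Fin (2 * M) → Bool := fun j =>
  decide (ε ⟨4 * M - 1 - j, by have := j.is_lt; omega⟩ = -1)

lemma Φ_fg (M : ℕ) (ε : Fin (4 * M) → ℤ) (h1 : ∀ i, ε i = 1 ∨ ε i = -1) :
    Φ M (fhalf M ε) (ghalf M ε) = ε := by
  funext i
  unfold Φ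
  by_cases h : (i : ℕ) < 2 * M
  · rw [dif_pos h]
    show step (fhalf M ε ⟨(i : ℕ), h⟩) = ε i
    unfold fhalf
    simp only [Fin.val_mk, Fin.eta]
    rcases h1 i with he | he <;> simp [step, he]
  · rw [dif_neg h]
    show -step (ghalf M ε ⟨4 * M - 1 - (i : ℕ), _⟩) = ε i
    unfold ghalf
    simp only [Fin.val_mk]
    have hidx : 4 * M - 1 - (4 * M - 1 - (i : ℕ)) = (i : ℕ) := by
      have := i.is_lt; omega
    simp only [hidx, Fin.eta]
    rcases h1 i with he | he <;> simp [step, he]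

end DyckAux

open DyckAux

/-- The number of Dyck words of semilength `2M` (i.e. `±1`-sequences of length `4M` with
`2M` up-steps and `2M` down-steps, equivalently total sum `0`, and all partial sums
nonnegative) whose height after the first `2M` steps equals `2p` is
`(binom(2M, M+p) − binom(2M, M+p+1))^2`. -/
theorem dyck_middle_height_count (M p : ℕ) (hp : p ≤ M) :
    Set.ncard {ε : Fin (4 * M) → ℤ |
        (∀ i, ε i = 1 ∨ ε i = -1) ∧
        (∀ k : ℕ, 1 ≤ k → k ≤ 4 * M →
          0 ≤ ∑ i ∈ Finset.univ.filter (fun i : Fin (4 * M) => (i : ℕ) < k), ε i) ∧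
        (∑ i, ε i) = 0 ∧
        (∑ i ∈ Finset.univ.filter (fun i : Fin (4 * M) => (i : ℕ) < 2 * M), ε i)
          = 2 * (p : ℤ)} =
      (Nat.choose (2 * M) (M + p) - Nat.choose (2 * M) (M + p + 1)) ^ 2 := by
  have hset : {ε : Fin (4 * M) → ℤ |
        (∀ i, ε i = 1 ∨ ε i = -1) ∧
        (∀ k : ℕ, 1 ≤ k → k ≤ 4 * M →
          0 ≤ ∑ i ∈ Finset.univ.filter (fun i : Fin (4 * M) => (i : ℕ) < k), ε i) ∧
        (∑ i, ε i) = 0 ∧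
        (∑ i ∈ Finset.univ.filter (fun i : Fin (4 * M) => (i : ℕ) < 2 * M), ε i)
          = 2 * (p : ℤ)} =
      Φp M '' ↑((P (2 * M) (M + p)) ×ˢ (P (2 * M) (M + p))) := by
    ext ε
    simp only [Set.mem_setOf_eq, Set.mem_image, Finset.mem_coe, Finset.mem_product]
    constructor
    · rintro ⟨h1, h2, h3, h4⟩
      have hΦ := Φ_fg M ε h1
      have htsum0 : ∀ k, k ≤ 4 * M → 0 ≤ DyckAux.tsum ε k := by
        intro k hk2
        rcases Nat.eq_zero_or_pos k with rfl | hk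
        · simp [tsum_zero]
        · rw [← filter_sum_eq ε k hk2]
          exact h2 k hk hk2
      have hmid : DyckAux.tsum ε (2 * M) = 2 * (p : ℤ) := by
        rw [← filter_sum_eq ε (2 * M) (by omega)]
        exact h4
      have htot : DyckAux.tsum ε (4 * M) = 0 := by rw [← sum_univ_eq_tsum]; exact h3
      set f := fhalf M ε with hfdef
      set g := ghalf M ε with hgdef
      have hlow : ∀ k, k ≤ 2 * M → DyckAux.tsum ε k = psum f k := by
        intro k hk
        rw [← hΦ]
        exact tsum_Φ_low M f g hk
      have hf2 : psum f (2 * M) = 2 * (p : ℤ) := by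
        rw [← hlow (2 * M) le_rfl]
        exact hmid
      have hhigh : ∀ k, 2 * M ≤ k → k ≤ 4 * M →
          DyckAux.tsum ε k = psum f (2 * M) - psum g (2 * M) + psum g (4 * M - k) := by
        intro k hk1 hk2
        rw [← hΦ]
        exact tsum_Φ_high M f g hk1 hk2
      have hg2 : psum g (2 * M) = 2 * (p : ℤ) := by
        have h := hhigh (4 * M) (by omega) le_rfl
        rw [htot, hf2] at h
        rw [Nat.sub_self, psum_zero] at h
        linarith
      refine ⟨(f, g), ⟨?_, ?_⟩, hΦ⟩
      · rw [mem_P]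
        refine ⟨fun k hk => ?_, ?_⟩
        · rw [← hlow k hk]
          exact htsum0 k (by omega)
        · rw [hf2]
          push_cast
          ring
      · rw [mem_P]
        refine ⟨fun k hk => ?_, ?_⟩
        · have h := hhigh (4 * M - k) (by omega) (by omega)
          rw [hf2, hg2] at h
          have hkk : 4 * M - (4 * M - k) = k := by omega
          rw [hkk] at h
          have := htsum0 (4 * M - k) (by omega)
          linarith
        · rw [hg2]
          push_cast
          ring
    · rintro ⟨⟨f, g⟩, ⟨hf, hg⟩, rfl⟩
      rw [Φp_eq]
      rw [mem_P] at hf hg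
      obtain ⟨hf1, hf2⟩ := hf
      obtain ⟨hg1, hg2⟩ := hg
      have hf2' : psum f (2 * M) = 2 * (p : ℤ) := by rw [hf2]; push_cast; ring
      have hg2' : psum g (2 * M) = 2 * (p : ℤ) := by rw [hg2]; push_cast; ring
      refine ⟨fun i => ?_, fun k hk1 hk4 => ?_, ?_, ?_⟩
      · show Φ M f g i = 1 ∨ Φ M f g i = -1
        unfold Φ
        by_cases h : (i : ℕ) < 2 * M
        · rw [dif_pos h]
          exact step_eq _
        · rw [dif_neg h]
          rcases step_eq (g ⟨4 * M - 1 - (i : ℕ), by have := i.is_lt; omega⟩) with he | he <;>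
            rw [he] <;> simp
      · rw [filter_sum_eq _ k hk4]
        rcases le_or_gt k (2 * M) with hk | hk
        · rw [tsum_Φ_low M f g hk]
          exact hf1 k hk
        · rw [tsum_Φ_high M f g (by omega) hk4, hf2', hg2']
          have := hg1 (4 * M - k) (by omega)
          linarith
      · rw [sum_univ_eq_tsum, tsum_Φ_high M f g (by omega) le_rfl, hf2', hg2',
          Nat.sub_self, psum_zero]
        ring
      · rw [filter_sum_eq _ (2 * M) (by omega), tsum_Φ_low M f g le_rfl]
        exact hf2'
  rw [hset, Set.ncard_image_of_injective _ (Φp_inj M), Set.ncard_coe_finset,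
    Finset.card_product, card_P_eq, sq]
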